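/- Milman's flat-vector lemma: Let W be a nonzero subspace of c₀ and let n ≤ dim W be a natural number. Then W contains a vector w with ‖w‖_∞ = 1 such that the set {j ∈ ℕ : |w(j)| = 1} has cardinality at least n. -/

import Mathlib

open Filter

/-- A sequence tending to `0` attains the supremum of its absolute value on any set
containing a point where it is nonzero. -/
lemma exists_max_abs (u : ℕ → ℝ) (hu : Tendsto u atTop (nhds 0)) (S : Set ℕ)
    (j1 : ℕ) (hj1 : j1 ∈ S) (hne : u j1 ≠ 0) :
    ∃ j0 ∈ S, ∀ j ∈ S, |u j| ≤ |u j0| := by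
  classical
  have hε : 0 < |u j1| := abs_pos.mpr hne
  obtain ⟨N, hN⟩ := Metric.tendsto_atTop.mp hu _ hε
  have hN' : ∀ j, N ≤ j → |u j| < |u j1| := by
    intro j hj
    have := hN j hj
    rwa [Real.dist_eq, sub_zero] at this
  set T : Finset ℕ := (Finset.range N).filter (· ∈ S) with hT
  have hj1T : j1 ∈ T := by
    refine Finset.mem_filter.mpr ⟨Finset.mem_range.mpr ?_, hj1⟩
    by_contra h
    exact absurd (hN' j1 (le_of_not_gt h)) (lt_irrefl _)
  obtain ⟨j0, hj0T, hmax⟩ := T.exists_max_image (fun j => |u j|) ⟨j1, hj1T⟩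
  refine ⟨j0, (Finset.mem_filter.mp hj0T).2, fun j hj => ?_⟩
  by_cases hjN : j < N
  · exact hmax j (Finset.mem_filter.mpr ⟨Finset.mem_range.mpr hjN, hj⟩)
  · exact le_trans (hN' j (le_of_not_gt hjN)).le (hmax j1 hj1T)

lemma flat_aux (W : Submodule ℝ (ℕ → ℝ))
    (hc0 : ∀ w ∈ W, Tendsto w atTop (nhds 0)) :
    ∀ m : ℕ, ((m + 1 : ℕ) : Cardinal) ≤ Module.rank ℝ W →
      ∃ w ∈ W, (∀ j, |w j| ≤ 1) ∧
        ∃ s : Finset ℕ, m + 1 ≤ s.card ∧ ∀ j ∈ s, |w j| = 1 := by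
  classical
  intro m
  induction m with
  | zero =>
    intro hrank
    have hWbot : W ≠ ⊥ := by
      intro h
      rw [h] at hrank
      simp [rank_bot] at hrank
    obtain ⟨w0, hw0W, hw0⟩ := (Submodule.ne_bot_iff W).mp hWbot
    obtain ⟨j1, hj1⟩ := Function.ne_iff.mp hw0
    obtain ⟨j0, -, hmax⟩ := exists_max_abs w0 (hc0 w0 hw0W) Set.univ j1 trivial hj1
    set M := |w0 j0| with hM
    have hMpos : 0 < M := lt_of_lt_of_le (abs_pos.mpr hj1) (hmax j1 trivial)
    refine ⟨M⁻¹ • w0, W.smul_mem _ hw0W, ?_, {j0}, by simp, ?_⟩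
    · intro j
      have : |M⁻¹ * w0 j| = M⁻¹ * |w0 j| := by
        rw [abs_mul, abs_of_pos (inv_pos.mpr hMpos)]
      calc |(M⁻¹ • w0) j| = M⁻¹ * |w0 j| := this
        _ ≤ M⁻¹ * M := by
            exact mul_le_mul_of_nonneg_left (hmax j trivial) (inv_pos.mpr hMpos).le
        _ = 1 := inv_mul_cancel₀ hMpos.ne'
    · intro j hj
      rw [Finset.mem_singleton] at hj
      rw [hj]
      show |M⁻¹ * w0 j0| = 1
      rw [abs_mul, abs_of_pos (inv_pos.mpr hMpos), ← hM, inv_mul_cancel₀ hMpos.ne']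
  | succ m ih =>
    intro hrank
    obtain ⟨w, hwW, hwle, s, hscard, hsflat⟩ := ih (le_trans (by exact_mod_cast by omega) hrank)
    -- the flat set of w is finite
    obtain ⟨N, hN⟩ := Metric.tendsto_atTop.mp (hc0 w hwW) 1 one_pos
    have hN' : ∀ j, N ≤ j → |w j| < 1 := by
      intro j hj
      have := hN j hj
      rwa [Real.dist_eq, sub_zero] at this
    set F : Finset ℕ := (Finset.range N).filter (fun j => |w j| = 1) with hFdef
    have hF : ∀ j, j ∈ F ↔ |w j| = 1 := by
      intro j
      constructor
      · intro h; exact (Finset.mem_filter.mp h).2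
      · intro h
        refine Finset.mem_filter.mpr ⟨Finset.mem_range.mpr ?_, h⟩
        by_contra hjN
        exact absurd h (ne_of_lt (hN' j (le_of_not_gt hjN)))
    have hsF : s ⊆ F := fun j hj => (hF j).mpr (hsflat j hj)
    have hFcard : m + 1 ≤ F.card := le_trans hscard (Finset.card_le_card hsF)
    by_cases hbig : m + 2 ≤ F.card
    · exact ⟨w, hwW, hwle, F, hbig, fun j hj => (hF j).mp hj⟩
    have hFcard' : F.card = m + 1 := by omega
    -- find a nonzero element of W vanishing on F
    set φ : ↥W →ₗ[ℝ] (↥F → ℝ) :=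
      LinearMap.pi (fun j : ↥F => (LinearMap.proj (j : ℕ)).comp W.subtype) with hφdef
    have hker : LinearMap.ker φ ≠ ⊥ := by
      intro h
      have hinj : Function.Injective φ := LinearMap.ker_eq_bot.mp h
      have h1 : Module.rank ℝ ↥W ≤ Module.rank ℝ (↥F → ℝ) := φ.rank_le_of_injective hinj
      rw [rank_fun', Fintype.card_coe, hFcard'] at h1
      have h2 : ((m + 2 : ℕ) : Cardinal) ≤ ((m + 1 : ℕ) : Cardinal) := le_trans hrank h1
      rw [Nat.cast_le] at h2
      omega
    obtain ⟨v', hv'ker, hv'ne⟩ := (Submodule.ne_bot_iff _).mp hker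
    set v : ℕ → ℝ := (v' : ℕ → ℝ) with hvdef
    have hvW : v ∈ W := v'.2
    have hvne : v ≠ 0 := fun h => hv'ne (Subtype.ext h)
    have hvF : ∀ j ∈ F, v j = 0 := by
      intro j hj
      have := LinearMap.mem_ker.mp hv'ker
      have := congrFun this ⟨j, hj⟩
      simpa [hφdef] using this
    obtain ⟨jv, hjv⟩ := Function.ne_iff.mp hvne
    -- the set of admissible dilation parameters
    set A : Set ℝ := {t : ℝ | 0 ≤ t ∧ ∀ j, |w j + t * v j| ≤ 1} with hAdef
    have h0A : (0 : ℝ) ∈ A := ⟨le_refl 0, fun j => by simpa using hwle j⟩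
    have hAbdd : BddAbove A := by
      refine ⟨2 / |v jv|, fun t ht => ?_⟩
      have hvjv : 0 < |v jv| := abs_pos.mpr hjv
      rw [le_div_iff₀ hvjv]
      have h1 : |t * v jv| ≤ |w jv + t * v jv| + |w jv| := by
        have := abs_sub_abs_le_abs_sub (t * v jv) (-(w jv))
        have h2 : |t * v jv| - |w jv| ≤ |w jv + t * v jv| := by
          calc |t * v jv| - |w jv| = |t * v jv| - |(-(w jv))| := by rw [abs_neg]
            _ ≤ |t * v jv - -(w jv)| := abs_sub_abs_le_abs_sub _ _
            _ = |w jv + t * v jv| := by ring_nf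
        linarith
      have h3 := ht.2 jv
      have h4 := hwle jv
      calc t * |v jv| = |t * v jv| := by
            rw [abs_mul, abs_of_nonneg ht.1]
        _ ≤ 2 := by linarith
    have hAclosed : IsClosed A := by
      have : A = Set.Ici (0:ℝ) ∩ ⋂ j, {t : ℝ | |w j + t * v j| ≤ 1} := by
        ext t
        simp [hAdef, Set.mem_iInter]
      rw [this]
      refine IsClosed.inter isClosed_Ici (isClosed_iInter fun j => ?_)
      exact isClosed_le ((continuous_const.add (continuous_id.mul continuous_const)).abs)
        continuous_const
    set t₀ := sSup A with ht₀
    have ht₀A : t₀ ∈ A := hAclosed.csSup_mem ⟨0, h0A⟩ hAbdd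
    set u : ℕ → ℝ := fun j => w j + t₀ * v j with hudef
    have huW : u ∈ W := by
      have := W.add_mem hwW (W.smul_mem t₀ hvW)
      convert this using 1
      ext j; simp [hudef]
    have hule : ∀ j, |u j| ≤ 1 := ht₀A.2
    have huF : ∀ j ∈ F, u j = w j := by
      intro j hj
      simp [hudef, hvF j hj]
    -- there is a new coordinate where |u| = 1
    have hex : ∃ j1, j1 ∉ F ∧ |u j1| = 1 := by
      by_contra hcon
      push_neg at hcon
      have hlt : ∀ j, j ∉ F → |u j| < 1 := fun j hj =>
        lt_of_le_of_ne (hule j) (hcon j hj)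
      have hθ : ∃ θ : ℝ, 0 ≤ θ ∧ θ < 1 ∧ ∀ j, j ∉ F → |u j| ≤ θ := by
        by_cases hz : ∃ j, j ∉ F ∧ u j ≠ 0
        · obtain ⟨ja, hja, hjane⟩ := hz
          obtain ⟨j0, hj0, hmax⟩ := exists_max_abs u (hc0 u huW) {j | j ∉ F} ja hja hjane
          exact ⟨|u j0|, abs_nonneg _, hlt j0 hj0, fun j hj => hmax j hj⟩
        · push_neg at hz
          refine ⟨0, le_refl 0, one_pos, fun j hj => ?_⟩
          rw [hz j hj, abs_zero]
      obtain ⟨θ, hθ0, hθ1, hθle⟩ := hθ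
      obtain ⟨jC, -, hCmax⟩ := exists_max_abs v (hc0 v hvW) Set.univ jv trivial hjv
      set C := |v jC| with hC
      have hCpos : 0 < C := lt_of_lt_of_le (abs_pos.mpr hjv) (hCmax jv trivial)
      set δ := (1 - θ) / (2 * C) with hδ
      have hδpos : 0 < δ := div_pos (by linarith) (by linarith)
      have hδC : δ * C = (1 - θ) / 2 := by
        field_simp [hδ]
        rw [hδ]; field_simp [hCpos.ne']
      have hmem : t₀ + δ ∈ A := by
        refine ⟨by linarith [ht₀A.1], fun j => ?_⟩
        have heq : w j + (t₀ + δ) * v j = u j + δ * v j := by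
          simp [hudef]; ring
        rw [heq]
        by_cases hjF : j ∈ F
        · rw [hvF j hjF, mul_zero, add_zero, huF j hjF, (hF j).mp hjF]
        · have h1 : |u j + δ * v j| ≤ |u j| + δ * |v j| := by
            calc |u j + δ * v j| ≤ |u j| + |δ * v j| := abs_add_le _ _
              _ = |u j| + δ * |v j| := by rw [abs_mul, abs_of_pos hδpos]
          have h2 : |u j| ≤ θ := hθle j hjF
          have h3 : δ * |v j| ≤ δ * C := mul_le_mul_of_nonneg_left (hCmax j trivial) hδpos.le
          linarith [hδC ▸ h3]
      have := le_csSup hAbdd hmem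
      rw [← ht₀] at this
      linarith
    obtain ⟨j1, hj1F, hj1⟩ := hex
    refine ⟨u, huW, hule, insert j1 F, ?_, ?_⟩
    · rw [Finset.card_insert_of_notMem hj1F, hFcard']
    · intro j hj
      rcases Finset.mem_insert.mp hj with h | h
      · subst h; exact hj1
      · rw [huF j h]; exact (hF j).mp h

/-- Milman's flat-vector lemma: a nonzero subspace `W` of `c₀` (realized as a subspace of
sequences tending to `0`, with the supremum norm) of dimension at least `n` contains a
vector of supremum norm `1` attaining its norm in at least `n` coordinates. -/
theorem milman_flat_vector (W : Submodule ℝ (ℕ → ℝ))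
    (hc0 : ∀ w ∈ W, Tendsto w atTop (nhds 0))
    (hW : W ≠ ⊥) (n : ℕ) (hn : (n : Cardinal) ≤ Module.rank ℝ W) :
    ∃ w ∈ W, (∀ j, |w j| ≤ 1) ∧ (∃ j, |w j| = 1) ∧
      ∃ s : Finset ℕ, n ≤ s.card ∧ ∀ j ∈ s, |w j| = 1 := by
  have hrank1 : ((0 + 1 : ℕ) : Cardinal) ≤ Module.rank ℝ W := by
    obtain ⟨w0, hw0W, hw0⟩ := (Submodule.ne_bot_iff W).mp hW
    have : Nontrivial ↥W := ⟨⟨w0, hw0W⟩, 0, fun h => hw0 (by simpa using congrArg Subtype.val h)⟩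
    simpa using (Cardinal.one_le_iff_pos.mpr rank_pos)
  cases n with
  | zero =>
    obtain ⟨w, hwW, hwle, s, hscard, hflat⟩ := flat_aux W hc0 0 hrank1
    obtain ⟨j, hj⟩ := Finset.card_pos.mp (by omega : 0 < s.card)
    exact ⟨w, hwW, hwle, ⟨j, hflat j hj⟩, s, by omega, hflat⟩
  | succ m =>
    obtain ⟨w, hwW, hwle, s, hscard, hflat⟩ := flat_aux W hc0 m (by exact_mod_cast hn)
    obtain ⟨j, hj⟩ := Finset.card_pos.mp (by omega : 0 < s.card)
    exact ⟨w, hwW, hwle, ⟨j, hflat j hj⟩, s, hscard, hflat⟩
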